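/- Let R₀ = (0,a) × (0,b) be a rectangle with a/3 ≤ b ≤ 3a and let B* > 0 satisfy a b B* ∈ 2πℤ. Then for every k ∈ ℕ there exist 2^k pairwise disjoint axis-parallel rectangles R_{k,1}, …, R_{k,2^k} (possibly empty), each with aspect ratio at most 3 and area A_{k,i} satisfying A_{k,i} B* ∈ 2πℤ, such that each R_{k,i} is the union (up to null sets) of two rectangles of the next generation, R₀ = ∪_i R_{k,i} up to null sets, and |A_{k,i} - 2^{-k} a b| ≤ 4π/B*. -/

import Mathlib

open MeasureTheory Set

/-- The open axis-parallel rectangle with lower-left corner `c` and side lengths `s`. -/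
def rect (c s : ℝ × ℝ) : Set (ℝ × ℝ) :=
  Ioo c.1 (c.1 + s.1) ×ˢ Ioo c.2 (c.2 + s.2)

noncomputable def cutlen (Bs a b : ℝ) : ℝ :=
  2 * Real.pi / (Bs * a) * ⌊Bs * a * b / (4 * Real.pi)⌋

noncomputable def kids (Bs : ℝ) (p : (ℝ × ℝ) × (ℝ × ℝ)) :
    ((ℝ × ℝ) × (ℝ × ℝ)) × ((ℝ × ℝ) × (ℝ × ℝ)) :=
  if p.2.1 ≤ p.2.2 then
    let t := cutlen Bs p.2.1 p.2.2
    if t = 0 then (p, (p.1, (0, 0)))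
    else ((p.1, (p.2.1, t)), ((p.1.1, p.1.2 + t), (p.2.1, p.2.2 - t)))
  else
    let t := cutlen Bs p.2.2 p.2.1
    if t = 0 then (p, (p.1, (0, 0)))
    else ((p.1, (t, p.2.2)), ((p.1.1 + t, p.1.2), (p.2.1 - t, p.2.2)))

def Good (Bs : ℝ) (s : ℝ × ℝ) : Prop :=
  0 ≤ s.1 ∧ 0 ≤ s.2 ∧ s.1 ≤ 3 * s.2 ∧ s.2 ≤ 3 * s.1 ∧
    ∃ m : ℤ, s.1 * s.2 * Bs = 2 * Real.pi * m

lemma good_zero (Bs : ℝ) : Good Bs (0, 0) := by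
  refine ⟨le_refl _, le_refl _, by norm_num, by norm_num, 0, by norm_num⟩

lemma rect_zero (c : ℝ × ℝ) : rect c (0, 0) = ∅ := by
  simp [rect]

lemma prod_line_null (u v w : ℝ) :
    volume ((Ioo u v) ×ˢ ({w} : Set ℝ)) = 0 := by
  rw [Measure.volume_eq_prod, Measure.prod_prod, Real.volume_singleton, mul_zero]

lemma line_prod_null (u v w : ℝ) :
    volume (({w} : Set ℝ) ×ˢ (Ioo u v)) = 0 := by
  rw [Measure.volume_eq_prod, Measure.prod_prod, Real.volume_singleton, zero_mul]

lemma cut_spec (Bs aa bb : ℝ) (hBs : 0 < Bs) (ha : 0 < aa) (hab : aa ≤ bb) (hb3 : bb ≤ 3 * aa)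
    (m : ℤ) (hm : aa * bb * Bs = 2 * Real.pi * m) (ht : cutlen Bs aa bb ≠ 0) :
    0 < cutlen Bs aa bb ∧ cutlen Bs aa bb < bb ∧
    aa ≤ 3 * cutlen Bs aa bb ∧ aa ≤ 3 * (bb - cutlen Bs aa bb) ∧
    (∃ m1 : ℤ, aa * cutlen Bs aa bb * Bs = 2 * Real.pi * m1) ∧
    (∃ m2 : ℤ, aa * (bb - cutlen Bs aa bb) * Bs = 2 * Real.pi * m2) ∧
    |aa * cutlen Bs aa bb - aa * bb / 2| ≤ Real.pi / Bs ∧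
    |aa * (bb - cutlen Bs aa bb) - aa * bb / 2| ≤ Real.pi / Bs := by
  have hπ := Real.pi_pos
  have hBa : Bs * aa ≠ 0 := by positivity
  have harg : Bs * aa * bb / (4 * Real.pi) = (m : ℝ) / 2 := by
    rw [show Bs * aa * bb = aa * bb * Bs by ring, hm]
    field_simp; ring
  set q : ℤ := ⌊Bs * aa * bb / (4 * Real.pi)⌋ with hq
  have hqval : q = ⌊(m : ℝ) / 2⌋ := by rw [hq, harg]
  have h1 : (q : ℝ) ≤ (m : ℝ) / 2 := hqval ▸ Int.floor_le _
  have h2 : (m : ℝ) / 2 < q + 1 := hqval ▸ Int.lt_floor_add_one _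
  have h2q : 2 * q ≤ m := by
    have : (2 * q : ℝ) ≤ (m : ℝ) := by linarith
    exact_mod_cast this
  have h2q' : m ≤ 2 * q + 1 := by
    have : (m : ℝ) < 2 * q + 2 := by linarith
    have := (by exact_mod_cast this : m < 2 * q + 2)
    omega
  -- cutlen in terms of q
  have hct : aa * cutlen Bs aa bb * Bs = 2 * Real.pi * q := by
    rw [cutlen, ← hq]; field_simp
  -- m is positive
  have hbb : 0 < bb := lt_of_lt_of_le ha hab
  have hm0 : 0 < m := by
    have : (0 : ℝ) < 2 * Real.pi * m := by rw [← hm]; positivity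
    have : (0 : ℝ) < (m : ℝ) := by nlinarith
    exact_mod_cast this
  have hq1 : 1 ≤ q := by
    rcases lt_or_ge q 1 with h | h
    · exfalso
      have hq0 : q = 0 := by omega
      apply ht
      rw [cutlen, ← hq, hq0]
      simp
    · exact h
  have hm2 : 2 ≤ m := by omega
  have h3q : m ≤ 3 * q := by omega
  -- real casts
  have rq1 : (1 : ℝ) ≤ (q : ℝ) := by exact_mod_cast hq1
  have r2q : 2 * (q : ℝ) ≤ (m : ℝ) := by exact_mod_cast h2q
  have r2q' : (m : ℝ) ≤ 2 * (q : ℝ) + 1 := by exact_mod_cast h2q'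
  have r3q : (m : ℝ) ≤ 3 * (q : ℝ) := by exact_mod_cast h3q
  have hBapos : 0 < Bs * aa := by positivity
  have hc0 : 0 < cutlen Bs aa bb := by nlinarith [hct]
  have hcb : cutlen Bs aa bb < bb := by nlinarith [hct, hm]
  have ha3 : aa ≤ 3 * cutlen Bs aa bb := by nlinarith [hct, hm]
  have ha3' : aa ≤ 3 * (bb - cutlen Bs aa bb) := by nlinarith [hct, hm]
  refine ⟨hc0, hcb, ha3, ha3', ⟨q, hct⟩, ⟨m - q, ?_⟩, ?_, ?_⟩
  · push_cast
    nlinarith [hct, hm]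
  · have e1 : aa * cutlen Bs aa bb - aa * bb / 2 = Real.pi * (2 * (q:ℝ) - m) / Bs := by
      field_simp
      linarith [hct, hm]
    have habs : |2 * (q:ℝ) - m| ≤ 1 := by rw [abs_le]; constructor <;> linarith
    calc |aa * cutlen Bs aa bb - aa * bb / 2| = Real.pi * |2 * (q:ℝ) - m| / Bs := by
          rw [e1, abs_div, abs_of_pos hBs, abs_mul, abs_of_pos hπ]
      _ ≤ Real.pi * 1 / Bs := by gcongr
      _ = Real.pi / Bs := by ring
  · have e1 : aa * (bb - cutlen Bs aa bb) - aa * bb / 2 = Real.pi * ((m:ℝ) - 2 * q) / Bs := by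
      field_simp
      linarith [hct, hm]
    have habs : |(m:ℝ) - 2 * q| ≤ 1 := by rw [abs_le]; constructor <;> linarith
    calc |aa * (bb - cutlen Bs aa bb) - aa * bb / 2| = Real.pi * |(m:ℝ) - 2 * q| / Bs := by
          rw [e1, abs_div, abs_of_pos hBs, abs_mul, abs_of_pos hπ]
      _ ≤ Real.pi * 1 / Bs := by gcongr
      _ = Real.pi / Bs := by ring

lemma cut_zero_area (Bs aa bb : ℝ) (hBs : 0 < Bs) (ha : 0 ≤ aa) (hab : aa ≤ bb)
    (m : ℤ) (hm : aa * bb * Bs = 2 * Real.pi * m) (ht : cutlen Bs aa bb = 0) :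
    aa * bb ≤ 2 * Real.pi / Bs := by
  have hπ := Real.pi_pos
  rcases eq_or_lt_of_le ha with h0 | hapos
  · rw [← h0, zero_mul]; positivity
  · have hbb : 0 < bb := lt_of_lt_of_le hapos hab
    have hBa : Bs * aa ≠ 0 := by positivity
    have harg : Bs * aa * bb / (4 * Real.pi) = (m : ℝ) / 2 := by
      rw [show Bs * aa * bb = aa * bb * Bs by ring, hm]
      field_simp; ring
    have hq0 : ⌊Bs * aa * bb / (4 * Real.pi)⌋ = 0 := by
      by_contra hq
      apply absurd ht
      rw [cutlen]
      have h1 : (2 * Real.pi / (Bs * aa)) ≠ 0 := by positivity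
      have h2 : ((⌊Bs * aa * bb / (4 * Real.pi)⌋ : ℝ)) ≠ 0 := by exact_mod_cast hq
      exact mul_ne_zero h1 h2
    rw [harg] at hq0
    have h2 : (m : ℝ) / 2 < 0 + 1 := by
      have := Int.lt_floor_add_one ((m : ℝ) / 2)
      rw [hq0] at this; push_cast at this; linarith
    have hm1 : (m : ℝ) ≤ 1 := by
      have : (m : ℝ) < 2 := by linarith
      have : m < 2 := by exact_mod_cast this
      have : m ≤ 1 := by omega
      exact_mod_cast this
    have : aa * bb * Bs ≤ 2 * Real.pi := by rw [hm]; nlinarith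
    rw [le_div_iff₀ hBs]
    exact this

lemma split_horiz (c1 c2 aa t u : ℝ) (ht : 0 ≤ t) (hu : 0 ≤ u) :
    Disjoint (rect (c1, c2) (aa, t)) (rect (c1, c2 + t) (aa, u)) ∧
    rect (c1, c2) (aa, t) ⊆ rect (c1, c2) (aa, t + u) ∧
    rect (c1, c2 + t) (aa, u) ⊆ rect (c1, c2) (aa, t + u) ∧
    volume (rect (c1, c2) (aa, t + u) \
      (rect (c1, c2) (aa, t) ∪ rect (c1, c2 + t) (aa, u))) = 0 := by
  refine ⟨?_, ?_, ?_, ?_⟩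
  · dsimp only [rect]
    apply Disjoint.set_prod_right
    rw [Set.disjoint_left]
    rintro x hx hy
    rw [mem_Ioo] at hx hy
    linarith [hx.2, hy.1]
  · dsimp only [rect]
    exact Set.prod_mono subset_rfl (Set.Ioo_subset_Ioo le_rfl (by linarith))
  · dsimp only [rect]
    exact Set.prod_mono subset_rfl (Set.Ioo_subset_Ioo (by linarith) (by linarith))
  · apply measure_mono_null _ (prod_line_null c1 (c1 + aa) (c2 + t))
    rintro ⟨x, y⟩ ⟨hmem, hnot⟩
    simp only [rect, Set.mem_prod, Set.mem_Ioo] at hmem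
    obtain ⟨hx, hy⟩ := hmem
    simp only [Set.mem_prod, Set.mem_Ioo, Set.mem_singleton_iff]
    refine ⟨hx, ?_⟩
    by_contra hne
    apply hnot
    rcases lt_or_gt_of_ne hne with hlt | hgt
    · left; simp only [rect, Set.mem_prod, Set.mem_Ioo]
      exact ⟨hx, hy.1, hlt⟩
    · right; simp only [rect, Set.mem_prod, Set.mem_Ioo]
      exact ⟨hx, hgt, by linarith [hy.2]⟩

lemma split_vert (c1 c2 bb t u : ℝ) (ht : 0 ≤ t) (hu : 0 ≤ u) :
    Disjoint (rect (c1, c2) (t, bb)) (rect (c1 + t, c2) (u, bb)) ∧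
    rect (c1, c2) (t, bb) ⊆ rect (c1, c2) (t + u, bb) ∧
    rect (c1 + t, c2) (u, bb) ⊆ rect (c1, c2) (t + u, bb) ∧
    volume (rect (c1, c2) (t + u, bb) \
      (rect (c1, c2) (t, bb) ∪ rect (c1 + t, c2) (u, bb))) = 0 := by
  refine ⟨?_, ?_, ?_, ?_⟩
  · dsimp only [rect]
    apply Disjoint.set_prod_left
    rw [Set.disjoint_left]
    rintro x hx hy
    rw [mem_Ioo] at hx hy
    linarith [hx.2, hy.1]
  · dsimp only [rect]
    exact Set.prod_mono (Set.Ioo_subset_Ioo le_rfl (by linarith)) subset_rfl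
  · dsimp only [rect]
    exact Set.prod_mono (Set.Ioo_subset_Ioo (by linarith) (by linarith)) subset_rfl
  · apply measure_mono_null _ (line_prod_null c2 (c2 + bb) (c1 + t))
    rintro ⟨x, y⟩ ⟨hmem, hnot⟩
    simp only [rect, Set.mem_prod, Set.mem_Ioo] at hmem
    obtain ⟨hx, hy⟩ := hmem
    simp only [Set.mem_prod, Set.mem_Ioo, Set.mem_singleton_iff]
    refine ⟨?_, hy⟩
    by_contra hne
    apply hnot
    rcases lt_or_gt_of_ne hne with hlt | hgt
    · left; simp only [rect, Set.mem_prod, Set.mem_Ioo]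
      exact ⟨⟨hx.1, hlt⟩, hy⟩
    · right; simp only [rect, Set.mem_prod, Set.mem_Ioo]
      exact ⟨⟨hgt, by linarith [hx.2]⟩, hy⟩

lemma kids_spec (Bs : ℝ) (hBs : 0 < Bs) (c s : ℝ × ℝ) (h : Good Bs s) :
    Good Bs (kids Bs (c, s)).1.2 ∧ Good Bs (kids Bs (c, s)).2.2 ∧
    |(kids Bs (c, s)).1.2.1 * (kids Bs (c, s)).1.2.2 - s.1 * s.2 / 2| ≤ Real.pi / Bs ∧
    |(kids Bs (c, s)).2.2.1 * (kids Bs (c, s)).2.2.2 - s.1 * s.2 / 2| ≤ Real.pi / Bs ∧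
    Disjoint (rect (kids Bs (c, s)).1.1 (kids Bs (c, s)).1.2)
      (rect (kids Bs (c, s)).2.1 (kids Bs (c, s)).2.2) ∧
    rect (kids Bs (c, s)).1.1 (kids Bs (c, s)).1.2 ⊆ rect c s ∧
    rect (kids Bs (c, s)).2.1 (kids Bs (c, s)).2.2 ⊆ rect c s ∧
    volume (rect c s \ (rect (kids Bs (c, s)).1.1 (kids Bs (c, s)).1.2 ∪
      rect (kids Bs (c, s)).2.1 (kids Bs (c, s)).2.2)) = 0 := by
  obtain ⟨hs1, hs2, h13, h23, m, hm⟩ := h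
  have hπ := Real.pi_pos
  have hA0 : 0 ≤ s.1 * s.2 := mul_nonneg hs1 hs2
  by_cases hle : s.1 ≤ s.2
  · by_cases ht : cutlen Bs s.1 s.2 = 0
    · simp only [kids, if_pos hle, if_pos ht]
      have hA : s.1 * s.2 ≤ 2 * Real.pi / Bs := cut_zero_area Bs s.1 s.2 hBs hs1 hle m hm ht
      rw [le_div_iff₀ hBs] at hA
      have har1 : |s.1 * s.2 - s.1 * s.2 / 2| ≤ Real.pi / Bs := by
        rw [show s.1 * s.2 - s.1 * s.2 / 2 = s.1 * s.2 / 2 by ring,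
          abs_of_nonneg (by linarith), le_div_iff₀ hBs]
        linarith
      have har2 : |(0:ℝ) * 0 - s.1 * s.2 / 2| ≤ Real.pi / Bs := by
        rw [zero_mul, zero_sub, abs_neg, abs_of_nonneg (by linarith), le_div_iff₀ hBs]
        linarith
      refine ⟨⟨hs1, hs2, h13, h23, m, hm⟩, good_zero Bs, har1, har2, ?_, subset_rfl, ?_, ?_⟩
      · rw [rect_zero]; exact disjoint_empty _
      · rw [rect_zero]; exact empty_subset _
      · rw [rect_zero, union_empty, diff_self, measure_empty]
    · have hs1pos : 0 < s.1 := by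
        rcases eq_or_lt_of_le hs1 with h0 | h0
        · exfalso; apply ht; rw [cutlen, ← h0]; simp
        · exact h0
      obtain ⟨c0, cb, a3, a3', f1, f2, ar1, ar2⟩ :=
        cut_spec Bs s.1 s.2 hBs hs1pos hle h23 m hm ht
      set t := cutlen Bs s.1 s.2 with htdef
      have hsplit := split_horiz c.1 c.2 s.1 t (s.2 - t) c0.le (by linarith)
      rw [show t + (s.2 - t) = s.2 by ring] at hsplit
      simp only [Prod.mk.eta] at hsplit
      simp only [kids, if_pos hle, if_neg ht, ← htdef]
      exact ⟨⟨hs1, c0.le, a3, show t ≤ 3 * s.1 by linarith, f1⟩,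
        ⟨hs1, show (0:ℝ) ≤ s.2 - t by linarith, a3',
          show s.2 - t ≤ 3 * s.1 by linarith, f2⟩,
        ar1, ar2, hsplit.1, hsplit.2.1, hsplit.2.2.1, hsplit.2.2.2⟩
  · have hlt : s.2 < s.1 := not_le.1 hle
    have hm' : s.2 * s.1 * Bs = 2 * Real.pi * m := by rw [show s.2 * s.1 = s.1 * s.2 by ring]; exact hm
    by_cases ht : cutlen Bs s.2 s.1 = 0
    · simp only [kids, if_neg hle, if_pos ht]
      have hA : s.2 * s.1 ≤ 2 * Real.pi / Bs := cut_zero_area Bs s.2 s.1 hBs hs2 hlt.le m hm' ht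
      rw [le_div_iff₀ hBs, show s.2 * s.1 = s.1 * s.2 by ring] at hA
      have har1 : |s.1 * s.2 - s.1 * s.2 / 2| ≤ Real.pi / Bs := by
        rw [show s.1 * s.2 - s.1 * s.2 / 2 = s.1 * s.2 / 2 by ring,
          abs_of_nonneg (by linarith), le_div_iff₀ hBs]
        linarith
      have har2 : |(0:ℝ) * 0 - s.1 * s.2 / 2| ≤ Real.pi / Bs := by
        rw [zero_mul, zero_sub, abs_neg, abs_of_nonneg (by linarith), le_div_iff₀ hBs]
        linarith
      refine ⟨⟨hs1, hs2, h13, h23, m, hm⟩, good_zero Bs, har1, har2, ?_, subset_rfl, ?_, ?_⟩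
      · rw [rect_zero]; exact disjoint_empty _
      · rw [rect_zero]; exact empty_subset _
      · rw [rect_zero, union_empty, diff_self, measure_empty]
    · have hs2pos : 0 < s.2 := by
        rcases eq_or_lt_of_le hs2 with h0 | h0
        · exfalso; apply ht; rw [cutlen, ← h0]; simp
        · exact h0
      obtain ⟨c0, cb, a3, a3', f1, f2, ar1, ar2⟩ :=
        cut_spec Bs s.2 s.1 hBs hs2pos hlt.le h13 m hm' ht
      set t := cutlen Bs s.2 s.1 with htdef
      have hsplit := split_vert c.1 c.2 s.2 t (s.1 - t) c0.le (by linarith)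
      rw [show t + (s.1 - t) = s.1 by ring] at hsplit
      simp only [Prod.mk.eta] at hsplit
      simp only [kids, if_neg hle, if_neg ht, ← htdef]
      obtain ⟨m1, hf1⟩ := f1
      obtain ⟨m2, hf2⟩ := f2
      refine ⟨⟨c0.le, hs2, show t ≤ 3 * s.2 by linarith, a3, m1,
          show t * s.2 * Bs = 2 * Real.pi * m1 by linarith⟩,
        ⟨show (0:ℝ) ≤ s.1 - t by linarith, hs2, show s.1 - t ≤ 3 * s.2 by linarith, a3', m2,
          show (s.1 - t) * s.2 * Bs = 2 * Real.pi * m2 by linarith⟩,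
        ?_, ?_, hsplit.1, hsplit.2.1, hsplit.2.2.1, hsplit.2.2.2⟩
      · show |t * s.2 - s.1 * s.2 / 2| ≤ Real.pi / Bs
        rw [show t * s.2 - s.1 * s.2 / 2 = s.2 * t - s.2 * s.1 / 2 by ring]
        exact ar1
      · show |(s.1 - t) * s.2 - s.1 * s.2 / 2| ≤ Real.pi / Bs
        rw [show (s.1 - t) * s.2 - s.1 * s.2 / 2 = s.2 * (s.1 - t) - s.2 * s.1 / 2 by ring]
        exact ar2

noncomputable def node (Bs a b : ℝ) : ℕ → ℕ → (ℝ × ℝ) × (ℝ × ℝ)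
  | 0, _ => ((0, 0), (a, b))
  | k + 1, i =>
      if i % 2 = 0 then (kids Bs (node Bs a b k (i / 2))).1
      else (kids Bs (node Bs a b k (i / 2))).2

lemma node_spec (Bs : ℝ) (hBs : 0 < Bs) (p : (ℝ × ℝ) × (ℝ × ℝ)) (h : Good Bs p.2) :
    Good Bs (kids Bs p).1.2 ∧ Good Bs (kids Bs p).2.2 ∧
    |(kids Bs p).1.2.1 * (kids Bs p).1.2.2 - p.2.1 * p.2.2 / 2| ≤ Real.pi / Bs ∧
    |(kids Bs p).2.2.1 * (kids Bs p).2.2.2 - p.2.1 * p.2.2 / 2| ≤ Real.pi / Bs ∧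
    Disjoint (rect (kids Bs p).1.1 (kids Bs p).1.2)
      (rect (kids Bs p).2.1 (kids Bs p).2.2) ∧
    rect (kids Bs p).1.1 (kids Bs p).1.2 ⊆ rect p.1 p.2 ∧
    rect (kids Bs p).2.1 (kids Bs p).2.2 ⊆ rect p.1 p.2 ∧
    volume (rect p.1 p.2 \ (rect (kids Bs p).1.1 (kids Bs p).1.2 ∪
      rect (kids Bs p).2.1 (kids Bs p).2.2)) = 0 := by
  have := kids_spec Bs hBs p.1 p.2 h
  rwa [Prod.mk.eta] at this

section main
variable {a b Bs : ℝ} (ha : 0 < a) (hb : 0 < b) (hBs : 0 < Bs)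
    (hab1 : a ≤ 3 * b) (hab2 : b ≤ 3 * a)
    (hflux : ∃ m : ℤ, a * b * Bs = 2 * Real.pi * m)

include ha hb hBs hab1 hab2 hflux in
lemma node_good : ∀ k i, Good Bs (node Bs a b k i).2 := by
  intro k
  induction k with
  | zero => intro i; exact ⟨ha.le, hb.le, hab1, hab2, hflux⟩
  | succ k ih =>
    intro i
    have H := node_spec Bs hBs (node Bs a b k (i / 2)) (ih (i / 2))
    simp only [node]
    split_ifs with h
    · exact H.1
    · exact H.2.1

include ha hb hBs hab1 hab2 hflux in
lemma node_area : ∀ k i,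
    |(node Bs a b k i).2.1 * (node Bs a b k i).2.2 - (2:ℝ) ^ (-(k:ℤ)) * (a * b)| ≤
      2 * Real.pi / Bs := by
  intro k
  induction k with
  | zero =>
    intro i
    simp only [node, Nat.cast_zero, neg_zero, zpow_zero, one_mul]
    have : a * b - a * b = 0 := by ring
    rw [show ((0,0),(a,b)).2.1 * ((0,0),(a,b)).2.2 - a * b = 0 by dsimp only; ring]
    rw [abs_zero]
    positivity
  | succ k ih =>
    intro i
    have H := node_spec Bs hBs (node Bs a b k (i / 2))
      (node_good ha hb hBs hab1 hab2 hflux k (i / 2))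
    have IH := ih (i / 2)
    have hpow : (2:ℝ) ^ (-((k+1:ℕ)):ℤ) * (a * b) = (2:ℝ) ^ (-(k:ℕ):ℤ) * (a * b) / 2 := by
      rw [show (-((k+1:ℕ)):ℤ) = (-(k:ℕ):ℤ) + (-1) by push_cast; ring,
        zpow_add₀ (two_ne_zero), zpow_neg_one]
      ring
    simp only [node]
    have hd : 2 * Real.pi / Bs = 2 * (Real.pi / Bs) := by ring
    split_ifs with h
    · rw [hpow]
      have h1 := H.2.2.1
      rw [abs_le] at *
      constructor <;> linarith [IH.1, IH.2, h1.1, h1.2, hd]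
    · rw [hpow]
      have h1 := H.2.2.2.1
      rw [abs_le] at *
      constructor <;> linarith [IH.1, IH.2, h1.1, h1.2, hd]

include ha hb hBs hab1 hab2 hflux in
lemma node_subset : ∀ k i,
    rect (node Bs a b (k+1) i).1 (node Bs a b (k+1) i).2 ⊆
      rect (node Bs a b k (i / 2)).1 (node Bs a b k (i / 2)).2 := by
  intro k i
  have H := node_spec Bs hBs (node Bs a b k (i / 2))
    (node_good ha hb hBs hab1 hab2 hflux k (i / 2))
  simp only [node]
  split_ifs with h
  · exact H.2.2.2.2.2.1
  · exact H.2.2.2.2.2.2.1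

include ha hb hBs hab1 hab2 hflux in
lemma node_disj : ∀ k i j, i < 2 ^ k → j < 2 ^ k → i ≠ j →
    Disjoint (rect (node Bs a b k i).1 (node Bs a b k i).2)
      (rect (node Bs a b k j).1 (node Bs a b k j).2) := by
  intro k
  induction k with
  | zero => intro i j hi hj hne; omega
  | succ k ih =>
    intro i j hi hj hne
    by_cases hp : i / 2 = j / 2
    · have H := node_spec Bs hBs (node Bs a b k (i / 2))
        (node_good ha hb hBs hab1 hab2 hflux k (i / 2))
      have hD := H.2.2.2.2.1
      rcases Nat.mod_two_eq_zero_or_one i with h0 | h0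
      · have h1 : j % 2 = 1 := by omega
        simp only [node, if_pos h0, h1]
        rw [← hp]
        simpa using hD
      · have h1 : j % 2 = 0 := by omega
        simp only [node, h0, if_pos h1]
        rw [← hp]
        simpa using hD.symm
    · exact Disjoint.mono (node_subset ha hb hBs hab1 hab2 hflux k i)
        (node_subset ha hb hBs hab1 hab2 hflux k j)
        (ih (i / 2) (j / 2) (by omega) (by omega) hp)

end main
lemma myBiUnion_pair {α : Type*} (g : ℕ → Set α) (n : ℕ) :
    ⋃ i ∈ Finset.range (2 * n), g i = ⋃ i ∈ Finset.range n, (g (2 * i) ∪ g (2 * i + 1)) := by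
  ext x
  simp only [Set.mem_iUnion, Finset.mem_range, Set.mem_union, exists_prop]
  constructor
  · rintro ⟨i, hi, hx⟩
    refine ⟨i / 2, by omega, ?_⟩
    rcases Nat.mod_two_eq_zero_or_one i with h | h
    · left; rwa [show 2 * (i / 2) = i by omega]
    · right; rwa [show 2 * (i / 2) + 1 = i by omega]
  · rintro ⟨i, hi, hx | hx⟩
    exacts [⟨2 * i, by omega, hx⟩, ⟨2 * i + 1, by omega, hx⟩]

lemma symmDiff_biUnion_subset {α : Type*} (t : Finset ℕ) (f g : ℕ → Set α) :
    symmDiff (⋃ i ∈ t, f i) (⋃ i ∈ t, g i) ⊆ ⋃ i ∈ t, symmDiff (f i) (g i) := by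
  intro x hx
  rw [Set.mem_symmDiff] at hx
  simp only [Set.mem_iUnion, exists_prop] at hx ⊢
  rcases hx with ⟨⟨i, hi, hx⟩, hns⟩ | ⟨⟨i, hi, hx⟩, hns⟩
  · exact ⟨i, hi, Set.mem_symmDiff.2 (Or.inl ⟨hx, fun h => hns ⟨i, hi, h⟩⟩)⟩
  · exact ⟨i, hi, Set.mem_symmDiff.2 (Or.inr ⟨hx, fun h => hns ⟨i, hi, h⟩⟩)⟩

lemma node_even (Bs a b : ℝ) (k i : ℕ) :
    node Bs a b (k+1) (2*i) = (kids Bs (node Bs a b k i)).1 := by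
  have h1 : (2*i) % 2 = 0 := by omega
  have h2 : (2*i) / 2 = i := by omega
  simp [node, h1, h2]

lemma node_odd (Bs a b : ℝ) (k i : ℕ) :
    node Bs a b (k+1) (2*i+1) = (kids Bs (node Bs a b k i)).2 := by
  have h1 : (2*i+1) % 2 = 1 := by omega
  have h2 : (2*i+1) / 2 = i := by omega
  simp [node, h1, h2]

section main2
variable {a b Bs : ℝ} (ha : 0 < a) (hb : 0 < b) (hBs : 0 < Bs)
    (hab1 : a ≤ 3 * b) (hab2 : b ≤ 3 * a)
    (hflux : ∃ m : ℤ, a * b * Bs = 2 * Real.pi * m)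

include ha hb hBs hab1 hab2 hflux in
lemma node_pc : ∀ k i, volume (symmDiff (rect (node Bs a b k i).1 (node Bs a b k i).2)
    (rect (node Bs a b (k+1) (2*i)).1 (node Bs a b (k+1) (2*i)).2 ∪
      rect (node Bs a b (k+1) (2*i+1)).1 (node Bs a b (k+1) (2*i+1)).2)) = 0 := by
  intro k i
  have H := node_spec Bs hBs (node Bs a b k i) (node_good ha hb hBs hab1 hab2 hflux k i)
  rw [node_even, node_odd,
    symmDiff_of_ge (union_subset H.2.2.2.2.2.1 H.2.2.2.2.2.2.1)]
  exact H.2.2.2.2.2.2.2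

include ha hb hBs hab1 hab2 hflux in
lemma node_cover : ∀ k, volume (symmDiff (rect (0, 0) (a, b))
    (⋃ i ∈ Finset.range (2 ^ k), rect (node Bs a b k i).1 (node Bs a b k i).2)) = 0 := by
  intro k
  induction k with
  | zero =>
    have h : ⋃ i ∈ Finset.range (2 ^ 0), rect (node Bs a b 0 i).1 (node Bs a b 0 i).2 =
        rect (0, 0) (a, b) := by
      simp [node]
    rw [h, symmDiff_self]
    simp
  | succ k ih =>
    have key : volume (symmDiff
        (⋃ i ∈ Finset.range (2 ^ k), rect (node Bs a b k i).1 (node Bs a b k i).2)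
        (⋃ i ∈ Finset.range (2 ^ (k+1)),
          rect (node Bs a b (k+1) i).1 (node Bs a b (k+1) i).2)) = 0 := by
      rw [show 2 ^ (k+1) = 2 * 2 ^ k by ring,
        myBiUnion_pair (fun i => rect (node Bs a b (k+1) i).1 (node Bs a b (k+1) i).2)]
      apply measure_mono_null (symmDiff_biUnion_subset _ _ _)
      apply measure_mono_null (Set.iUnion₂_subset fun i _ => Set.subset_iUnion
        (fun i => symmDiff (rect (node Bs a b k i).1 (node Bs a b k i).2)
          (rect (node Bs a b (k+1) (2*i)).1 (node Bs a b (k+1) (2*i)).2 ∪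
            rect (node Bs a b (k+1) (2*i+1)).1 (node Bs a b (k+1) (2*i+1)).2)) i)
      exact measure_iUnion_null fun i => node_pc ha hb hBs hab1 hab2 hflux k i
    rw [measure_symmDiff_eq_zero_iff] at ih key ⊢
    exact ih.trans key

end main2

/-- Flux-quantized dyadic subdivision of a rectangle: at each generation `k` there are
`2^k` pairwise disjoint rectangles of aspect ratio at most 3 and quantized area, each
splitting into two rectangles of the next generation, covering `R₀` up to null sets,
with areas close to `2^{-k} a b`. -/
theorem stmt7 (a b Bs : ℝ) (ha : 0 < a) (hb : 0 < b) (hBs : 0 < Bs)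
    (hab1 : a ≤ 3 * b) (hab2 : b ≤ 3 * a)
    (hflux : ∃ m : ℤ, a * b * Bs = 2 * Real.pi * m) :
    ∃ (c s : ℕ → ℕ → ℝ × ℝ),
      c 0 0 = (0, 0) ∧ s 0 0 = (a, b) ∧
      (∀ k i, i < 2 ^ k → 0 ≤ (s k i).1 ∧ 0 ≤ (s k i).2 ∧
        (s k i).1 ≤ 3 * (s k i).2 ∧ (s k i).2 ≤ 3 * (s k i).1) ∧
      (∀ k i, i < 2 ^ k → ∃ m : ℤ, (s k i).1 * (s k i).2 * Bs = 2 * Real.pi * m) ∧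
      (∀ k i j, i < 2 ^ k → j < 2 ^ k → i ≠ j →
        Disjoint (rect (c k i) (s k i)) (rect (c k j) (s k j))) ∧
      (∀ k i, i < 2 ^ k →
        volume (symmDiff (rect (c k i) (s k i))
          (rect (c (k+1) (2*i)) (s (k+1) (2*i)) ∪ rect (c (k+1) (2*i+1)) (s (k+1) (2*i+1)))) = 0) ∧
      (∀ k, volume (symmDiff (rect (0, 0) (a, b))
          (⋃ i ∈ Finset.range (2 ^ k), rect (c k i) (s k i))) = 0) ∧
      (∀ k i, i < 2 ^ k →
        |(s k i).1 * (s k i).2 - (2:ℝ) ^ (-(k:ℤ)) * (a * b)| ≤ 4 * Real.pi / Bs) := by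
  refine ⟨fun k i => (node Bs a b k i).1, fun k i => (node Bs a b k i).2,
    rfl, rfl, ?_, ?_, ?_, ?_, ?_, ?_⟩
  · intro k i _
    have G := node_good ha hb hBs hab1 hab2 hflux k i
    exact ⟨G.1, G.2.1, G.2.2.1, G.2.2.2.1⟩
  · intro k i _
    exact (node_good ha hb hBs hab1 hab2 hflux k i).2.2.2.2
  · intro k i j hi hj hne
    exact node_disj ha hb hBs hab1 hab2 hflux k i j hi hj hne
  · intro k i _
    exact node_pc ha hb hBs hab1 hab2 hflux k i
  · exact node_cover ha hb hBs hab1 hab2 hflux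
  · intro k i _
    have h1 := node_area ha hb hBs hab1 hab2 hflux k i
    have h2 : 2 * Real.pi / Bs ≤ 4 * Real.pi / Bs := by
      have := Real.pi_pos
      rw [div_le_div_iff₀ hBs hBs]
      nlinarith
    linarith
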